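/- Let Π be a Markov kernel on X satisfying the minorization Π(x, dy) ≥ ε ν(dy) for all x, with ε ∈ (0,1) and probability measure ν, and let π be its invariant probability measure. Define the residual kernel R(x,dy) := (Π(x,dy) - εν(dy))/(1-ε). Then π admits the mixture representation π(dx) = Σ_{n=1}^∞ ε(1-ε)^{n-1} (νR^{n-1})(dx). -/

import Mathlib

open MeasureTheory ProbabilityTheory
open scoped ENNReal

/-- The distribution ν R^n after n steps of the kernel R started from ν. -/
noncomputable def iterBind {X : Type*} [MeasurableSpace X]
    (ν : Measure X) (R : Kernel X X) : ℕ → Measure X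
  | 0 => ν
  | n + 1 => (iterBind ν R n).bind (fun x => R x)

section Aux

variable {X : Type*} [MeasurableSpace X] (R : Kernel X X) [IsMarkovKernel R]

lemma iterBind_univ (μ : Measure X) [IsProbabilityMeasure μ] (n : ℕ) :
    iterBind μ R n Set.univ = 1 := by
  induction n with
  | zero => simp [iterBind]
  | succ n ih =>
    rw [iterBind, Measure.bind_apply MeasurableSet.univ R.measurable.aemeasurable]
    simp [measure_univ, ih]

lemma bind_comb (μ₁ μ₂ : Measure X) (c d : ℝ≥0∞) :
    (c • μ₁ + d • μ₂).bind (fun x => R x)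
      = c • μ₁.bind (fun x => R x) + d • μ₂.bind (fun x => R x) := by
  ext s hs
  rw [Measure.bind_apply hs R.measurable.aemeasurable]
  simp only [Measure.add_apply, Measure.smul_apply, smul_eq_mul]
  rw [lintegral_add_measure, lintegral_smul_measure, lintegral_smul_measure,
    Measure.bind_apply hs R.measurable.aemeasurable,
    Measure.bind_apply hs R.measurable.aemeasurable]
  rfl

lemma iterBind_comb (μ₁ μ₂ : Measure X) (c d : ℝ≥0∞) (n : ℕ) :
    iterBind (c • μ₁ + d • μ₂) R n = c • iterBind μ₁ R n + d • iterBind μ₂ R n := by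
  induction n with
  | zero => rfl
  | succ n ih => rw [iterBind, ih, bind_comb]; rfl

lemma iterBind_shift (μ : Measure X) (n : ℕ) :
    iterBind (μ.bind (fun x => R x)) R n = iterBind μ R (n + 1) := by
  induction n with
  | zero => rfl
  | succ n ih =>
    show (iterBind (μ.bind (fun x => R x)) R n).bind _ = (iterBind μ R (n+1)).bind _
    rw [ih]

end Aux

/-- if Π(x,·) = εν + (1-ε)R(x,·) with π invariant for Π, then π admits
the mixture representation π = ∑_{n≥1} ε(1-ε)^{n-1} ν R^{n-1} (here indexed from n = 0). -/
theorem stmt_13 {X : Type*} [MeasurableSpace X]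
    (K R : Kernel X X) [IsMarkovKernel K] [IsMarkovKernel R]
    (ν π : Measure X) [IsProbabilityMeasure ν] [IsProbabilityMeasure π]
    (ε : ℝ) (hε0 : 0 < ε) (hε1 : ε < 1)
    (hdec : ∀ x A, MeasurableSet A →
      K x A = ENNReal.ofReal ε * ν A + ENNReal.ofReal (1 - ε) * R x A)
    (hinv : π.bind (fun x => K x) = π) :
    ∀ A, MeasurableSet A →
      π A = ∑' n : ℕ, ENNReal.ofReal (ε * (1 - ε) ^ n) * iterBind ν R n A := by
  intro A hA
  set a := ENNReal.ofReal ε with ha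
  set b := ENNReal.ofReal (1 - ε) with hb
  have hb1 : b < 1 := by
    rw [hb]; exact ENNReal.ofReal_lt_one.mpr (by linarith)
  -- the key decomposition π = a • ν + b • (π.bind R)
  have hkey : π = a • ν + b • π.bind (fun x => R x) := by
    ext s hs
    conv_lhs => rw [← hinv]
    rw [Measure.bind_apply hs K.measurable.aemeasurable]
    have hVal : ∀ x, K x s = a * ν s + b * R x s := fun x => hdec x s hs
    simp_rw [hVal]
    rw [lintegral_add_left measurable_const, lintegral_const, measure_univ, mul_one,
      lintegral_const_mul _ (R.measurable_coe hs),
      ← Measure.bind_apply hs R.measurable.aemeasurable]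
    simp [Measure.smul_apply, smul_eq_mul]
  have hstep : ∀ n, iterBind π R n = a • iterBind ν R n + b • iterBind π R (n + 1) := by
    intro n
    conv_lhs => rw [hkey]
    rw [iterBind_comb, iterBind_shift]
  have hpart : ∀ n, π A = (∑ k ∈ Finset.range n, a * b ^ k * iterBind ν R k A)
      + b ^ n * iterBind π R n A := by
    intro n
    induction n with
    | zero => simp [iterBind]
    | succ n ih =>
      rw [ih, hstep n]
      simp only [Measure.add_apply, Measure.smul_apply, smul_eq_mul, Finset.sum_range_succ]
      ring
  have hle1 : ∀ n, iterBind π R n A ≤ 1 := fun n => by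
    rw [← iterBind_univ R π n]; exact measure_mono (Set.subset_univ A)
  have hub : π A ≤ ∑' n, a * b ^ n * iterBind ν R n A := by
    have hto : Filter.Tendsto
        (fun n => (∑' k, a * b ^ k * iterBind ν R k A) + b ^ n) Filter.atTop
        (nhds ((∑' k, a * b ^ k * iterBind ν R k A) + 0)) :=
      Filter.Tendsto.const_add _ (ENNReal.tendsto_pow_atTop_nhds_zero_of_lt_one hb1)
    rw [add_zero] at hto
    refine ge_of_tendsto' hto (fun n => ?_)
    calc π A = (∑ k ∈ Finset.range n, a * b ^ k * iterBind ν R k A)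
        + b ^ n * iterBind π R n A := hpart n
      _ ≤ (∑' k, a * b ^ k * iterBind ν R k A) + b ^ n * 1 := by
          gcongr
          · exact ENNReal.sum_le_tsum _
          · exact hle1 n
      _ = (∑' k, a * b ^ k * iterBind ν R k A) + b ^ n := by rw [mul_one]
  have hlb : (∑' n, a * b ^ n * iterBind ν R n A) ≤ π A := by
    rw [ENNReal.tsum_eq_iSup_nat]
    refine iSup_le fun n => ?_
    rw [hpart n]
    exact le_add_right le_rfl
  have hcoef : ∀ n : ℕ, ENNReal.ofReal (ε * (1 - ε) ^ n) = a * b ^ n := by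
    intro n
    rw [ENNReal.ofReal_mul hε0.le, ENNReal.ofReal_pow (by linarith)]
  simp_rw [hcoef]
  exact le_antisymm hub hlb
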